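/- Path coupling (Bubley–Dyer): suppose that for any two states s, s' with d(s, s') = 1 there exists a coupling μ of f(s) and f(s') such that E_{(r,r')∼μ}[d(r, r')] ≤ β. Then for any two states s, s' and any t : ℕ, there exists a coupling μ of f^{(t)}(s) and f^{(t)}(s') such that TV(f^{(t)}(s), f^{(t)}(s')) ≤ Pr_{(r,r')∼μ}[r ≠ r'] ≤ β^t · Δ. -/

import Mathlib

open scoped ENNReal

/-- A coupling of `μ₁` and `μ₂` is a distribution on pairs whose marginals are `μ₁` and `μ₂`. -/
def IsCoupling {A B : Type*} (μ : PMF (A × B)) (μ₁ : PMF A) (μ₂ : PMF B) : Prop :=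
  μ.map Prod.fst = μ₁ ∧ μ.map Prod.snd = μ₂

/-- Total variation distance between two PMFs. -/
noncomputable def TV {A : Type*} (μ₁ μ₂ : PMF A) : ℝ :=
  (1 / 2) * ∑' a, |(μ₁ a).toReal - (μ₂ a).toReal|

/-- Probability of an event under a PMF, as a real number. -/
noncomputable def PMF.pr {α : Type*} (μ : PMF α) (E : Set α) : ℝ :=
  (μ.toOuterMeasure E).toReal

/-- `iter f t s` is the `t`-fold monadic iterate of `f` starting from the point mass at `s`. -/
noncomputable def iter {Ω : Type*} (f : Ω → PMF Ω) : ℕ → Ω → PMF Ω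
  | 0, s => PMF.pure s
  | t + 1, s => (iter f t s).bind f

set_option linter.unusedSectionVars false

section Aux
variable {Ω : Type*} [Fintype Ω] [DecidableEq Ω]

lemma marg_fst (μ : PMF (Ω × Ω)) (a : Ω) :
    (μ.map Prod.fst) a = ∑ b : Ω, μ (a, b) := by
  rw [PMF.map_apply, tsum_fintype, Fintype.sum_prod_type, Finset.sum_comm]
  refine Finset.sum_congr rfl fun x _ => ?_
  refine (Finset.sum_eq_single a (fun b _ hb => if_neg fun h => hb h.symm)
    (fun h => absurd (Finset.mem_univ a) h)).trans (if_pos rfl)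

lemma marg_snd (μ : PMF (Ω × Ω)) (b : Ω) :
    (μ.map Prod.snd) b = ∑ a : Ω, μ (a, b) := by
  rw [PMF.map_apply, tsum_fintype, Fintype.sum_prod_type_right, Finset.sum_comm]
  refine Finset.sum_congr rfl fun x _ => ?_
  refine (Finset.sum_eq_single b (fun c _ hc => if_neg fun h => hc h.symm)
    (fun h => absurd (Finset.mem_univ b) h)).trans (if_pos rfl)

noncomputable def Ed (d : Ω → Ω → ℕ) (μ : PMF (Ω × Ω)) : ℝ≥0∞ :=
  ∑' p : Ω × Ω, μ p * (d p.1 p.2 : ℝ≥0∞)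

lemma Ed_eq (d : Ω → Ω → ℕ) (μ : PMF (Ω × Ω)) :
    Ed d μ = ∑ a : Ω, ∑ b : Ω, μ (a, b) * (d a b : ℝ≥0∞) := by
  rw [Ed, tsum_fintype, Fintype.sum_prod_type]

lemma glue (d : Ω → Ω → ℕ)
    (hdtri : ∀ s s' s'', d s s'' ≤ d s s' + d s' s'')
    {ν₁ ν₂ ν₃ : PMF Ω} {μ₁ μ₂ : PMF (Ω × Ω)}
    (h₁ : IsCoupling μ₁ ν₁ ν₂) (h₂ : IsCoupling μ₂ ν₂ ν₃) :
    ∃ μ : PMF (Ω × Ω), IsCoupling μ ν₁ ν₃ ∧ Ed d μ ≤ Ed d μ₁ + Ed d μ₂ := by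
  have hfact1 : ∀ a b, μ₁ (a, b) ≤ ν₂ b := by
    intro a b
    rw [← h₁.2, marg_snd]
    exact Finset.single_le_sum (f := fun x => μ₁ (x, b)) (fun i _ => zero_le) (Finset.mem_univ a)
  have hfact2 : ∀ b c, μ₂ (b, c) ≤ ν₂ b := by
    intro b c
    rw [← h₂.1, marg_fst]
    exact Finset.single_le_sum (f := fun x => μ₂ (b, x)) (fun i _ => zero_le) (Finset.mem_univ c)
  have hν₂top : ∀ b, ν₂ b ≠ ⊤ := fun b => (ν₂.apply_lt_top b).ne
  set g : Ω × Ω → ℝ≥0∞ := fun q => ∑ b : Ω, μ₁ (q.1, b) * μ₂ (b, q.2) / ν₂ b with hg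
  -- cancellation helpers
  have hcancel1 : ∀ a b, μ₁ (a, b) * (ν₂ b / ν₂ b) = μ₁ (a, b) := by
    intro a b
    by_cases hb : ν₂ b = 0
    · have h := hfact1 a b
      rw [hb] at h
      have : μ₁ (a, b) = 0 := le_antisymm h zero_le
      simp [this]
    · rw [ENNReal.div_self hb (hν₂top b), mul_one]
  have hcancel2 : ∀ b c, (ν₂ b / ν₂ b) * μ₂ (b, c) = μ₂ (b, c) := by
    intro b c
    by_cases hb : ν₂ b = 0
    · have h := hfact2 b c
      rw [hb] at h
      have : μ₂ (b, c) = 0 := le_antisymm h zero_le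
      simp [this]
    · rw [ENNReal.div_self hb (hν₂top b), one_mul]
  have hsum2 : ∀ b, ∑ c : Ω, μ₂ (b, c) = ν₂ b := by
    intro b; rw [← marg_fst, h₂.1]
  have hsum1 : ∀ b, ∑ a : Ω, μ₁ (a, b) = ν₂ b := by
    intro b; rw [← marg_snd, h₁.2]
  have hrow : ∀ a, ∑ c : Ω, g (a, c) = ν₁ a := by
    intro a
    have : ∑ c : Ω, g (a, c) = ∑ b : Ω, μ₁ (a, b) := by
      rw [hg]
      simp only
      rw [Finset.sum_comm]
      refine Finset.sum_congr rfl fun b _ => ?_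
      calc ∑ c : Ω, μ₁ (a, b) * μ₂ (b, c) / ν₂ b
          = μ₁ (a, b) * ((∑ c : Ω, μ₂ (b, c)) / ν₂ b) := by
            simp only [div_eq_mul_inv, Finset.sum_mul, Finset.mul_sum]
            exact Finset.sum_congr rfl fun c _ => by ring
        _ = μ₁ (a, b) := by rw [hsum2 b]; exact hcancel1 a b
    rw [this, ← marg_fst, h₁.1]
  have hcol : ∀ c, ∑ a : Ω, g (a, c) = ν₃ c := by
    intro c
    have : ∑ a : Ω, g (a, c) = ∑ b : Ω, μ₂ (b, c) := by
      rw [hg]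
      simp only
      rw [Finset.sum_comm]
      refine Finset.sum_congr rfl fun b _ => ?_
      calc ∑ a : Ω, μ₁ (a, b) * μ₂ (b, c) / ν₂ b
          = ((∑ a : Ω, μ₁ (a, b)) / ν₂ b) * μ₂ (b, c) := by
            simp only [div_eq_mul_inv, Finset.sum_mul, Finset.mul_sum]
            exact Finset.sum_congr rfl fun a _ => by ring
        _ = μ₂ (b, c) := by rw [hsum1 b]; exact hcancel2 b c
    rw [this, ← marg_snd, h₂.2]
  have htotal : ∑ q : Ω × Ω, g q = 1 := by
    rw [Fintype.sum_prod_type]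
    simp only [hrow]
    have := ν₁.tsum_coe
    rwa [tsum_fintype] at this
  refine ⟨PMF.ofFintype g htotal, ⟨?_, ?_⟩, ?_⟩
  · apply PMF.ext; intro a
    rw [marg_fst]
    simp only [PMF.ofFintype_apply]
    exact hrow a
  · apply PMF.ext; intro c
    rw [marg_snd]
    simp only [PMF.ofFintype_apply]
    exact hcol c
  · rw [Ed_eq]
    simp only [PMF.ofFintype_apply]
    have step1 : ∀ a c, g (a, c) * (d a c : ℝ≥0∞)
        ≤ ∑ b : Ω, μ₁ (a, b) * μ₂ (b, c) / ν₂ b * ((d a b : ℝ≥0∞) + (d b c : ℝ≥0∞)) := by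
      intro a c
      rw [hg]; simp only
      rw [Finset.sum_mul]
      refine Finset.sum_le_sum fun b _ => ?_
      refine mul_le_mul_right ?_ _
      have := hdtri a b c
      exact_mod_cast this
    calc ∑ a : Ω, ∑ c : Ω, g (a, c) * (d a c : ℝ≥0∞)
        ≤ ∑ a : Ω, ∑ c : Ω, ∑ b : Ω,
            μ₁ (a, b) * μ₂ (b, c) / ν₂ b * ((d a b : ℝ≥0∞) + (d b c : ℝ≥0∞)) :=
          Finset.sum_le_sum fun a _ => Finset.sum_le_sum fun c _ => step1 a c
      _ = (∑ a : Ω, ∑ c : Ω, ∑ b : Ω, μ₁ (a, b) * μ₂ (b, c) / ν₂ b * (d a b : ℝ≥0∞))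
          + (∑ a : Ω, ∑ c : Ω, ∑ b : Ω, μ₁ (a, b) * μ₂ (b, c) / ν₂ b * (d b c : ℝ≥0∞)) := by
          simp only [mul_add, Finset.sum_add_distrib]
      _ ≤ Ed d μ₁ + Ed d μ₂ := by
          gcongr
          · -- first part
            rw [Ed_eq]
            calc ∑ a : Ω, ∑ c : Ω, ∑ b : Ω, μ₁ (a, b) * μ₂ (b, c) / ν₂ b * (d a b : ℝ≥0∞)
                = ∑ a : Ω, ∑ b : Ω, ∑ c : Ω, μ₁ (a, b) * μ₂ (b, c) / ν₂ b * (d a b : ℝ≥0∞) :=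
                  Finset.sum_congr rfl fun a _ => Finset.sum_comm
              _ ≤ ∑ a : Ω, ∑ b : Ω, μ₁ (a, b) * (d a b : ℝ≥0∞) := ?_
            refine Finset.sum_le_sum fun a _ => Finset.sum_le_sum fun b _ => ?_
            calc ∑ c : Ω, μ₁ (a, b) * μ₂ (b, c) / ν₂ b * (d a b : ℝ≥0∞)
                = (μ₁ (a, b) * (d a b : ℝ≥0∞)) * ((∑ c : Ω, μ₂ (b, c)) / ν₂ b) := by
                  simp only [div_eq_mul_inv, Finset.sum_mul, Finset.mul_sum]
                  exact Finset.sum_congr rfl fun c _ => by ring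
              _ ≤ μ₁ (a, b) * (d a b : ℝ≥0∞) := by
                  rw [hsum2 b]
                  refine mul_le_of_le_one_right' ?_
                  exact ENNReal.div_self_le_one
          · rw [Ed_eq]
            calc ∑ a : Ω, ∑ c : Ω, ∑ b : Ω, μ₁ (a, b) * μ₂ (b, c) / ν₂ b * (d b c : ℝ≥0∞)
                = ∑ c : Ω, ∑ a : Ω, ∑ b : Ω, μ₁ (a, b) * μ₂ (b, c) / ν₂ b * (d b c : ℝ≥0∞) :=
                  Finset.sum_comm
              _ = ∑ c : Ω, ∑ b : Ω, ∑ a : Ω, μ₁ (a, b) * μ₂ (b, c) / ν₂ b * (d b c : ℝ≥0∞) :=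
                  Finset.sum_congr rfl fun c _ => Finset.sum_comm
              _ = ∑ b : Ω, ∑ c : Ω, ∑ a : Ω, μ₁ (a, b) * μ₂ (b, c) / ν₂ b * (d b c : ℝ≥0∞) :=
                  Finset.sum_comm
              _ ≤ ∑ b : Ω, ∑ c : Ω, μ₂ (b, c) * (d b c : ℝ≥0∞) := ?_
            refine Finset.sum_le_sum fun b _ => Finset.sum_le_sum fun c _ => ?_
            calc ∑ a : Ω, μ₁ (a, b) * μ₂ (b, c) / ν₂ b * (d b c : ℝ≥0∞)
                = (μ₂ (b, c) * (d b c : ℝ≥0∞)) * ((∑ a : Ω, μ₁ (a, b)) / ν₂ b) := by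
                  simp only [div_eq_mul_inv, Finset.sum_mul, Finset.mul_sum]
                  exact Finset.sum_congr rfl fun a _ => by ring
              _ ≤ μ₂ (b, c) * (d b c : ℝ≥0∞) := by
                  rw [hsum1 b]
                  refine mul_le_of_le_one_right' ?_
                  exact ENNReal.div_self_le_one

lemma Ed_pure (d : Ω → Ω → ℕ) (p : Ω × Ω) : Ed d (PMF.pure p) = (d p.1 p.2 : ℝ≥0∞) := by
  rw [Ed, tsum_fintype]
  rw [Finset.sum_eq_single p]
  · simp [PMF.pure_apply]
  · intro q _ hq
    rw [PMF.pure_apply, if_neg hq, zero_mul]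
  · intro h; exact absurd (Finset.mem_univ p) h

lemma diag_coupling (d : Ω → Ω → ℕ) (hd : ∀ s, d s s = 0) (ν : PMF Ω) :
    ∃ μ : PMF (Ω × Ω), IsCoupling μ ν ν ∧ Ed d μ = 0 := by
  refine ⟨ν.map (fun r => (r, r)), ⟨?_, ?_⟩, ?_⟩
  · rw [PMF.map_comp]
    exact PMF.map_id ν
  · rw [PMF.map_comp]
    exact PMF.map_id ν
  · rw [Ed]
    convert tsum_zero with p
    by_cases hp : (ν.map (fun r => (r, r))) p = 0
    · rw [hp, zero_mul]
    · have hmem : p ∈ (ν.map (fun r => (r, r))).support := by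
        rwa [PMF.mem_support_iff]
      rw [PMF.support_map] at hmem
      obtain ⟨x, _, hx⟩ := hmem
      rw [← hx]
      simp [hd x]

lemma step_any (d : Ω → Ω → ℕ)
    (hd0 : ∀ s s', d s s' = 0 ↔ s = s')
    (hdtri : ∀ s s' s'', d s s'' ≤ d s s' + d s' s'')
    (hpath : ∀ s s', 1 < d s s' →
      ∃ s'', s'' ≠ s ∧ s'' ≠ s' ∧ d s s' = d s s'' + d s'' s')
    (f : Ω → PMF Ω) (B : ℝ≥0∞)
    (hcouple : ∀ s s', d s s' = 1 →
      ∃ μ : PMF (Ω × Ω), IsCoupling μ (f s) (f s') ∧ Ed d μ ≤ B) :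
    ∀ (n : ℕ) (s s' : Ω), d s s' = n →
      ∃ μ : PMF (Ω × Ω), IsCoupling μ (f s) (f s') ∧ Ed d μ ≤ (n : ℝ≥0∞) * B := by
  intro n
  induction n using Nat.strong_induction_on with
  | _ n ih =>
    intro s s' hn
    by_cases h0 : n = 0
    · subst h0
      have hss : s = s' := (hd0 s s').1 hn
      subst hss
      obtain ⟨μ, hc, he⟩ := diag_coupling d (fun x => (hd0 x x).2 rfl) (f s)
      exact ⟨μ, hc, by rw [he]; exact zero_le⟩
    by_cases h1 : n = 1
    · subst h1
      obtain ⟨μ, hc, he⟩ := hcouple s s' hn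
      exact ⟨μ, hc, by rwa [Nat.cast_one, one_mul]⟩
    have hlt : 1 < n := by omega
    obtain ⟨s'', hne1, hne2, hsplit⟩ := hpath s s' (hn ▸ hlt)
    set n₁ := d s s'' with hn₁
    set n₂ := d s'' s' with hn₂
    have hn₁0 : n₁ ≠ 0 := fun h => hne1 ((hd0 s s'').1 h).symm
    have hn₂0 : n₂ ≠ 0 := fun h => hne2 ((hd0 s'' s').1 h)
    have hnn : n = n₁ + n₂ := by rw [← hn]; exact hsplit
    have hlt₁ : n₁ < n := by omega
    have hlt₂ : n₂ < n := by omega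
    obtain ⟨μ₁, hc₁, he₁⟩ := ih n₁ hlt₁ s s'' rfl
    obtain ⟨μ₂, hc₂, he₂⟩ := ih n₂ hlt₂ s'' s' rfl
    obtain ⟨μ, hc, he⟩ := glue d hdtri hc₁ hc₂
    refine ⟨μ, hc, ?_⟩
    calc Ed d μ ≤ Ed d μ₁ + Ed d μ₂ := he
      _ ≤ (n₁ : ℝ≥0∞) * B + (n₂ : ℝ≥0∞) * B := add_le_add he₁ he₂
      _ = ((n₁ + n₂ : ℕ) : ℝ≥0∞) * B := by rw [Nat.cast_add, add_mul]
      _ = (n : ℝ≥0∞) * B := by rw [← hnn]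

lemma bind_coupling (d : Ω → Ω → ℕ) (f : Ω → PMF Ω) {ν₁ ν₂ : PMF Ω} {μ : PMF (Ω × Ω)}
    (h : IsCoupling μ ν₁ ν₂)
    (κ : Ω × Ω → PMF (Ω × Ω)) (hκ : ∀ p, IsCoupling (κ p) (f p.1) (f p.2)) :
    IsCoupling (μ.bind κ) (ν₁.bind f) (ν₂.bind f) ∧
    Ed d (μ.bind κ) = ∑ p : Ω × Ω, μ p * Ed d (κ p) := by
  constructor
  · constructor
    · rw [PMF.map_bind]
      have : (fun p => (κ p).map Prod.fst) = fun p : Ω × Ω => f p.1 := by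
        funext p; exact (hκ p).1
      rw [this, ← h.1, PMF.bind_map]
      rfl
    · rw [PMF.map_bind]
      have : (fun p => (κ p).map Prod.snd) = fun p : Ω × Ω => f p.2 := by
        funext p; exact (hκ p).2
      rw [this, ← h.2, PMF.bind_map]
      rfl
  · rw [Ed, tsum_fintype]
    have : ∀ q : Ω × Ω, (μ.bind κ) q * (d q.1 q.2 : ℝ≥0∞)
        = ∑ p : Ω × Ω, μ p * (κ p q * (d q.1 q.2 : ℝ≥0∞)) := by
      intro q
      rw [PMF.bind_apply, tsum_fintype, Finset.sum_mul]
      exact Finset.sum_congr rfl fun p _ => mul_assoc _ _ _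
    rw [Finset.sum_congr rfl fun q _ => this q, Finset.sum_comm]
    refine Finset.sum_congr rfl fun p _ => ?_
    rw [← Finset.mul_sum, Ed, tsum_fintype]

lemma iter_coupling (d : Ω → Ω → ℕ)
    (hd0 : ∀ s s', d s s' = 0 ↔ s = s')
    (hdtri : ∀ s s' s'', d s s'' ≤ d s s' + d s' s'')
    (hpath : ∀ s s', 1 < d s s' →
      ∃ s'', s'' ≠ s ∧ s'' ≠ s' ∧ d s s' = d s s'' + d s'' s')
    (f : Ω → PMF Ω) (B : ℝ≥0∞)
    (hcouple : ∀ s s', d s s' = 1 →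
      ∃ μ : PMF (Ω × Ω), IsCoupling μ (f s) (f s') ∧ Ed d μ ≤ B)
    (s s' : Ω) (t : ℕ) :
    ∃ μ : PMF (Ω × Ω), IsCoupling μ (iter f t s) (iter f t s') ∧
      Ed d μ ≤ B ^ t * (d s s' : ℝ≥0∞) := by
  induction t with
  | zero =>
    refine ⟨PMF.pure (s, s'), ⟨?_, ?_⟩, ?_⟩
    · rw [PMF.pure_map]; rfl
    · rw [PMF.pure_map]; rfl
    · rw [Ed_pure, pow_zero, one_mul]
  | succ t ihn =>
    obtain ⟨μt, hct, het⟩ := ihn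
    choose κ hκ1 hκ2 using fun p : Ω × Ω =>
      step_any d hd0 hdtri hpath f B hcouple (d p.1 p.2) p.1 p.2 rfl
    obtain ⟨hc, he⟩ := bind_coupling d f hct κ hκ1
    refine ⟨μt.bind κ, hc, ?_⟩
    calc Ed d (μt.bind κ) = ∑ p : Ω × Ω, μt p * Ed d (κ p) := he
      _ ≤ ∑ p : Ω × Ω, μt p * ((d p.1 p.2 : ℝ≥0∞) * B) :=
        Finset.sum_le_sum fun p _ => mul_le_mul_right (hκ2 p) _
      _ = (∑ p : Ω × Ω, μt p * (d p.1 p.2 : ℝ≥0∞)) * B := by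
        rw [Finset.sum_mul]
        exact Finset.sum_congr rfl fun p _ => (mul_assoc _ _ _).symm
      _ = Ed d μt * B := by rw [Ed, tsum_fintype]
      _ ≤ B ^ t * (d s s' : ℝ≥0∞) * B := mul_le_mul_left het B
      _ = B ^ (t + 1) * (d s s' : ℝ≥0∞) := by ring

lemma prNE_le_Ed (d : Ω → Ω → ℕ) (hd0 : ∀ s s', d s s' = 0 ↔ s = s') (μ : PMF (Ω × Ω)) :
    μ.toOuterMeasure {p | p.1 ≠ p.2} ≤ Ed d μ := by
  rw [PMF.toOuterMeasure_apply, Ed]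
  refine Summable.tsum_le_tsum (fun p => ?_) ENNReal.summable ENNReal.summable
  rw [Set.indicator_apply]
  split_ifs with hp
  · have hd : d p.1 p.2 ≠ 0 := fun h => hp ((hd0 p.1 p.2).1 h)
    have : (1 : ℝ≥0∞) ≤ (d p.1 p.2 : ℝ≥0∞) := by
      exact_mod_cast Nat.one_le_iff_ne_zero.2 hd
    exact le_mul_of_one_le_right' this
  · exact zero_le

lemma pr_eq (μ : PMF (Ω × Ω)) :
    μ.pr {p | p.1 ≠ p.2}
      = ∑ a : Ω, ∑ b : Ω, if a = b then 0 else (μ (a, b)).toReal := by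
  rw [PMF.pr, PMF.toOuterMeasure_apply, tsum_fintype, ENNReal.toReal_sum
    (fun p _ => ne_top_of_le_ne_top (μ.apply_lt_top p).ne (Set.indicator_le_self _ _ p)),
    Fintype.sum_prod_type]
  refine Finset.sum_congr rfl fun a _ => Finset.sum_congr rfl fun b _ => ?_
  rw [Set.indicator_apply]
  by_cases h : a = b
  · simp [h]
  · simp only [Set.mem_setOf_eq]
    rw [if_pos h, if_neg h]

lemma TV_le_pr {ν₁ ν₂ : PMF Ω} (μ : PMF (Ω × Ω)) (h : IsCoupling μ ν₁ ν₂) :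
    TV ν₁ ν₂ ≤ μ.pr {p | p.1 ≠ p.2} := by
  set m : Ω → Ω → ℝ := fun a b => (μ (a, b)).toReal with hm
  have hm0 : ∀ a b, 0 ≤ m a b := fun a b => ENNReal.toReal_nonneg
  have h1 : ∀ a, (ν₁ a).toReal = ∑ b : Ω, m a b := by
    intro a
    rw [← h.1, marg_fst, ENNReal.toReal_sum (fun b _ => (μ.apply_lt_top _).ne)]
  have h2 : ∀ a, (ν₂ a).toReal = ∑ b : Ω, m b a := by
    intro a
    rw [← h.2, marg_snd, ENNReal.toReal_sum (fun b _ => (μ.apply_lt_top _).ne)]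
  have key : ∀ a, |(ν₁ a).toReal - (ν₂ a).toReal|
      ≤ ∑ b : Ω, if b = a then 0 else m a b + m b a := by
    intro a
    rw [h1, h2, ← Finset.sum_sub_distrib]
    have : ∀ b, m a b - m b a = (if b = a then 0 else m a b - m b a) := by
      intro b
      split_ifs with hb
      · subst hb; ring
      · rfl
    rw [Finset.sum_congr rfl fun b _ => this b]
    refine (Finset.abs_sum_le_sum_abs _ _).trans (Finset.sum_le_sum fun b _ => ?_)
    split_ifs with hb
    · simp
    · exact (abs_sub _ _).trans (by rw [abs_of_nonneg (hm0 a b), abs_of_nonneg (hm0 b a)])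
  have hsum : ∑ a : Ω, ∑ b : Ω, (if b = a then 0 else m a b + m b a)
      = 2 * μ.pr {p | p.1 ≠ p.2} := by
    rw [pr_eq]
    have e1 : ∑ a : Ω, ∑ b : Ω, (if b = a then 0 else m a b + m b a)
        = (∑ a : Ω, ∑ b : Ω, if b = a then 0 else m a b)
          + (∑ a : Ω, ∑ b : Ω, if b = a then 0 else m b a) := by
      rw [← Finset.sum_add_distrib]
      refine Finset.sum_congr rfl fun a _ => ?_
      rw [← Finset.sum_add_distrib]
      refine Finset.sum_congr rfl fun b _ => ?_
      split_ifs <;> simp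
    rw [e1]
    have e2 : ∑ a : Ω, ∑ b : Ω, (if b = a then 0 else m b a)
        = ∑ a : Ω, ∑ b : Ω, (if b = a then 0 else m a b) := by
      rw [Finset.sum_comm]
      refine Finset.sum_congr rfl fun a _ => Finset.sum_congr rfl fun b _ => ?_
      by_cases hab : a = b
      · subst hab; rfl
      · rw [if_neg hab, if_neg (fun hh => hab hh.symm)]
    have e3 : ∑ a : Ω, ∑ b : Ω, (if b = a then 0 else m a b)
        = ∑ a : Ω, ∑ b : Ω, (if a = b then 0 else m a b) := by
      refine Finset.sum_congr rfl fun a _ => Finset.sum_congr rfl fun b _ => ?_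
      by_cases hab : a = b
      · rw [if_pos hab, if_pos hab.symm]
      · rw [if_neg hab, if_neg (fun hh => hab hh.symm)]
    rw [e2, e3, hm]
    ring
  calc TV ν₁ ν₂ = (1 / 2) * ∑ a : Ω, |(ν₁ a).toReal - (ν₂ a).toReal| := by
        rw [TV, tsum_fintype]
    _ ≤ (1 / 2) * ∑ a : Ω, ∑ b : Ω, (if b = a then 0 else m a b + m b a) := by
        refine mul_le_mul_of_nonneg_left (Finset.sum_le_sum fun a _ => key a) (by norm_num)
    _ = μ.pr {p | p.1 ≠ p.2} := by rw [hsum]; ring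

end Aux

/-- Path coupling (Bubley–Dyer): if adjacent states can be coupled with expected distance at
most `β`, then the `t`-step distributions from any two states can be coupled so that the
probability of disagreement, which bounds the total variation distance, is at most `β ^ t * Δ`. -/
theorem path_coupling {Ω : Type*} [Fintype Ω] [Nonempty Ω]
    (d : Ω → Ω → ℕ)
    (hd0 : ∀ s s', d s s' = 0 ↔ s = s')
    (hdsymm : ∀ s s', d s s' = d s' s)
    (hdtri : ∀ s s' s'', d s s'' ≤ d s s' + d s' s'')
    (hpath : ∀ s s', 1 < d s s' →
      ∃ s'', s'' ≠ s ∧ s'' ≠ s' ∧ d s s' = d s s'' + d s'' s')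
    (Δ : ℕ) (hΔ : ∀ s s', d s s' ≤ Δ)
    (f : Ω → PMF Ω) (β : ℝ) (hβ : 0 ≤ β)
    (hcouple : ∀ s s', d s s' = 1 →
      ∃ μ : PMF (Ω × Ω), IsCoupling μ (f s) (f s') ∧
        ∑' p : Ω × Ω, μ p * (d p.1 p.2 : ℝ≥0∞) ≤ ENNReal.ofReal β) :
    ∀ (s s' : Ω) (t : ℕ),
      ∃ μ : PMF (Ω × Ω), IsCoupling μ (iter f t s) (iter f t s') ∧
        TV (iter f t s) (iter f t s') ≤ μ.pr {p | p.1 ≠ p.2} ∧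
        μ.pr {p | p.1 ≠ p.2} ≤ β ^ t * Δ := by
  classical
  intro s s' t
  set B := ENNReal.ofReal β with hB
  obtain ⟨μ, hc, he⟩ := iter_coupling d hd0 hdtri hpath f B
    (fun a b h => by
      obtain ⟨ν, h1, h2⟩ := hcouple a b h
      exact ⟨ν, h1, h2⟩) s s' t
  refine ⟨μ, hc, TV_le_pr μ hc, ?_⟩
  have h1 : μ.toOuterMeasure {p | p.1 ≠ p.2} ≤ Ed d μ := prNE_le_Ed d hd0 μ
  have h2 : Ed d μ ≤ B ^ t * (Δ : ℝ≥0∞) :=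
    he.trans (mul_le_mul_right (by exact_mod_cast hΔ s s') _)
  have h3 : B ^ t * (Δ : ℝ≥0∞) = ENNReal.ofReal (β ^ t * Δ) := by
    rw [ENNReal.ofReal_mul (pow_nonneg hβ t), ENNReal.ofReal_pow hβ, ENNReal.ofReal_natCast]
  show (μ.toOuterMeasure {p | p.1 ≠ p.2}).toReal ≤ β ^ t * Δ
  refine ENNReal.toReal_le_of_le_ofReal
    (mul_nonneg (pow_nonneg hβ t) (Nat.cast_nonneg Δ)) ?_
  rw [← h3]
  exact h1.trans h2
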